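/- Let X be a uniformly convex real Banach space, let C be a nonempty closed convex subset of X with C = −C, and let T : C → C be an odd (c)-mapping (T(−x) = −Tx for all x ∈ C). Assume: (i) there exists x₀ ∈ C such that the orbit O(x₀) = {Tⁿx₀ : n ≥ 0} is bounded; (ii) for every integer i ≥ 1 and all x, y ∈ C, the sequence n ↦ ‖T^{n+i}x − Tⁿy‖ is decreasing. Then the Picard sequence (Tⁿx₀)ₙ converges in norm to a fixed point of T. -/

import Mathlib

/-- `T` is a (c)-mapping on `C`. -/
def IsCMapping {X : Type*} [NormedAddCommGroup X] (T : X → X) (C : Set X) : Prop :=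
  ∃ a c : ℝ, a ∈ Set.Icc (0 : ℝ) 1 ∧ c ∈ Set.Icc (0 : ℝ) 1 ∧ 0 < c ∧ a + 2 * c = 1 ∧
    ∀ x ∈ C, ∀ y ∈ C, ‖T x - T y‖ ≤ a * ‖x - y‖ + c * (‖T x - y‖ + ‖T y - x‖)

/-- Under uniform convexity, symmetry of `C`, oddness of the (c)-mapping
`T`, boundedness of an orbit, and the monotonicity hypothesis (ii), the Picard sequence
from `x₀` converges in norm to a fixed point of `T`. -/
theorem picard_converges_to_fixed_point
    {X : Type*} [NormedAddCommGroup X] [NormedSpace ℝ X] [CompleteSpace X]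
    [UniformConvexSpace X]
    (C : Set X) (hne : C.Nonempty) (hclosed : IsClosed C) (hconv : Convex ℝ C)
    (hsymm : C = -C)
    (T : X → X) (hT : Set.MapsTo T C C) (hc : IsCMapping T C)
    (hodd : ∀ x ∈ C, T (-x) = -T x)
    (x₀ : X) (hx₀ : x₀ ∈ C)
    (horbit : Bornology.IsBounded (Set.range fun n : ℕ => T^[n] x₀))
    (hmono : ∀ i : ℕ, 1 ≤ i → ∀ x ∈ C, ∀ y ∈ C,
      Antitone fun n : ℕ => ‖T^[n + i] x - T^[n] y‖) :
    ∃ z ∈ C, T z = z ∧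
      Filter.Tendsto (fun n : ℕ => T^[n] x₀) Filter.atTop (nhds z) := by
  classical
  obtain ⟨a, c, ha, hcI, hcpos, hsum, hineq⟩ := hc
  set x : ℕ → X := fun n => T^[n] x₀ with hxdef
  have hxC : ∀ n, x n ∈ C := by
    intro n
    induction n with
    | zero => simpa [x] using hx₀
    | succ n ih => simp only [x, Function.iterate_succ_apply']; exact hT ih
  have hstep : ∀ n, x (n + 1) = T (x n) := fun n => Function.iterate_succ_apply' T n x₀
  have hnegmem : ∀ q ∈ C, -q ∈ C := by
    intro q hq
    rw [hsymm]
    simpa using hq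
  obtain ⟨p, hp⟩ := hne
  have h0C : (0 : X) ∈ C := by
    have h := hconv hp (hnegmem p hp) (le_of_lt one_half_pos) (le_of_lt one_half_pos)
      (by norm_num)
    have : (1 / 2 : ℝ) • p + (1 / 2 : ℝ) • (-p) = 0 := by
      rw [smul_neg]; abel
    rwa [this] at h
  have hT0 : T 0 = 0 := by
    have h := hodd 0 h0C
    rw [neg_zero] at h
    have h2 : (2 : ℝ) • T 0 = 0 := by rw [two_smul]; nth_rewrite 1 [h]; abel
    have := smul_eq_zero.mp h2
    exact this.resolve_left (by norm_num)
  have hT0n : ∀ n, T^[n] (0 : X) = 0 := by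
    intro n
    induction n with
    | zero => rfl
    | succ n ih => rw [Function.iterate_succ_apply', ih, hT0]
  have hTneg : ∀ n, T^[n] (-x₀) = -x n := by
    intro n
    induction n with
    | zero => rfl
    | succ n ih =>
      rw [Function.iterate_succ_apply', ih, hodd (x n) (hxC n), hstep]
  -- the norms are antitone (shifted by one)
  have hnorm_anti : Antitone fun n => ‖x (n + 1)‖ := by
    have h := hmono 1 le_rfl x₀ hx₀ 0 h0C
    simpa only [hT0n, sub_zero] using h
  have hbdd0 : BddBelow (Set.range fun n => ‖x (n + 1)‖) := by
    refine ⟨0, ?_⟩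
    rintro _ ⟨n, rfl⟩
    positivity
  set r : ℝ := ⨅ n, ‖x (n + 1)‖ with hrdef
  have hr0 : 0 ≤ r := le_ciInf fun n => norm_nonneg _
  have hrle : ∀ n, r ≤ ‖x (n + 1)‖ := fun n => ciInf_le hbdd0 n
  have htends : Filter.Tendsto (fun n => ‖x (n + 1)‖) Filter.atTop (nhds r) :=
    tendsto_atTop_ciInf hnorm_anti hbdd0
  -- the double sequence B
  set B : ℕ → ℕ → ℝ := fun i n => ‖x (n + i + 1) + x (n + 1)‖ with hBdef
  have hBnonneg : ∀ i n, 0 ≤ B i n := fun i n => norm_nonneg _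
  have hB0 : ∀ n, B 0 n = 2 * ‖x (n + 1)‖ := by
    intro n
    show ‖x (n + 0 + 1) + x (n + 1)‖ = 2 * ‖x (n + 1)‖
    rw [Nat.add_zero, ← two_smul ℝ, norm_smul]
    norm_num
  have hBanti : ∀ i, Antitone (B i) := by
    intro i
    rcases Nat.eq_zero_or_pos i with hi | hi
    · subst hi
      intro m n hmn
      rw [hB0, hB0]
      have := hnorm_anti hmn
      linarith
    · have h := hmono i hi x₀ hx₀ (-x₀) (hnegmem x₀ hx₀)
      simp only [hTneg, sub_neg_eq_add] at h
      intro m n hmn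
      show ‖x (n + i + 1) + x (n + 1)‖ ≤ ‖x (m + i + 1) + x (m + 1)‖
      rw [show n + i + 1 = n + 1 + i by omega, show m + i + 1 = m + 1 + i by omega]
      exact h (Nat.add_le_add_right hmn 1)
  have hBbdd : ∀ i, BddBelow (Set.range (B i)) := by
    intro i
    exact ⟨0, by rintro _ ⟨n, rfl⟩; exact hBnonneg i n⟩
  set s : ℕ → ℝ := fun i => ⨅ n, B i n with hsdef
  have hstend : ∀ i, Filter.Tendsto (B i) Filter.atTop (nhds (s i)) := fun i =>
    tendsto_atTop_ciInf (hBanti i) (hBbdd i)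
  have hsle : ∀ i n, s i ≤ B i n := fun i n => ciInf_le (hBbdd i) n
  have hs0 : s 0 = 2 * r := by
    have h1 : Filter.Tendsto (fun n => 2 * ‖x (n + 1)‖) Filter.atTop (nhds (2 * r)) :=
      htends.const_mul 2
    have h2 : Filter.Tendsto (B 0) Filter.atTop (nhds (2 * r)) := by
      refine h1.congr fun n => (hB0 n).symm
    exact tendsto_nhds_unique (hstend 0) h2
  -- upper bound s i ≤ 2r
  have hs_le : ∀ i, s i ≤ 2 * r := by
    intro i
    have h1 : Filter.Tendsto (fun n => ‖x (n + i + 1)‖ + ‖x (n + 1)‖) Filter.atTop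
        (nhds (r + r)) := by
      have ha1 : Filter.Tendsto (fun n => ‖x (n + i + 1)‖) Filter.atTop (nhds r) :=
        htends.comp (Filter.tendsto_add_atTop_nat i)
      exact ha1.add htends
    have h2 : ∀ n, s i ≤ ‖x (n + i + 1)‖ + ‖x (n + 1)‖ := fun n =>
      (hsle i n).trans (norm_add_le _ _)
    have := ge_of_tendsto' h1 h2
    linarith
  -- recurrence inequalities
  have hrec0 : s 0 ≤ a * s 0 + c * (s 1 + s 1) := by
    have hpt : ∀ n, B 0 (n + 1) ≤ a * B 0 n + c * (B 1 n + B 1 n) := by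
      intro n
      have h := hineq (x (n + 1)) (hxC _) (-(x (n + 1))) (hnegmem _ (hxC _))
      rw [hodd (x (n + 1)) (hxC _)] at h
      rw [← hstep] at h
      have e1 : ‖x (n + 2) - -x (n + 2)‖ = B 0 (n + 1) := by
        show _ = ‖x (n + 1 + 0 + 1) + x (n + 1 + 1)‖
        rw [sub_neg_eq_add]
      have e2 : ‖x (n + 1) - -x (n + 1)‖ = B 0 n := by
        rw [sub_neg_eq_add, hB0, ← two_smul ℝ, norm_smul]
        norm_num
      have e3 : ‖x (n + 2) - -x (n + 1)‖ = B 1 n := by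
        show _ = ‖x (n + 1 + 1) + x (n + 1)‖
        rw [sub_neg_eq_add]
      have e4 : ‖-x (n + 2) - x (n + 1)‖ = B 1 n := by
        show _ = ‖x (n + 1 + 1) + x (n + 1)‖
        rw [← norm_neg]
        congr 1
        abel
      rw [e1, e2, e3, e4] at h
      exact h
    have h1 : Filter.Tendsto (fun n => B 0 (n + 1)) Filter.atTop (nhds (s 0)) :=
      (hstend 0).comp (Filter.tendsto_add_atTop_nat 1)
    have h2 : Filter.Tendsto (fun n => a * B 0 n + c * (B 1 n + B 1 n)) Filter.atTop
        (nhds (a * s 0 + c * (s 1 + s 1))) :=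
      ((hstend 0).const_mul a).add (((hstend 1).add (hstend 1)).const_mul c)
    exact le_of_tendsto_of_tendsto' h1 h2 hpt
  have hrec : ∀ i, s (i + 1) ≤ a * s (i + 1) + c * (s (i + 2) + s i) := by
    intro i
    have hpt : ∀ n, B (i + 1) (n + 1) ≤ a * B (i + 1) n + c * (B (i + 2) n + B i (n + 1)) := by
      intro n
      have h := hineq (x (n + i + 2)) (hxC _) (-(x (n + 1))) (hnegmem _ (hxC _))
      rw [hodd (x (n + 1)) (hxC _)] at h
      rw [← hstep, ← hstep] at h
      have e1 : ‖x (n + i + 2 + 1) - -x (n + 1 + 1)‖ = B (i + 1) (n + 1) := by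
        show _ = ‖x (n + 1 + (i + 1) + 1) + x (n + 1 + 1)‖
        rw [sub_neg_eq_add, show n + 1 + (i + 1) + 1 = n + i + 2 + 1 by omega]
      have e2 : ‖x (n + i + 2) - -x (n + 1)‖ = B (i + 1) n := by
        show _ = ‖x (n + (i + 1) + 1) + x (n + 1)‖
        rw [sub_neg_eq_add, show n + (i + 1) + 1 = n + i + 2 by omega]
      have e3 : ‖x (n + i + 2 + 1) - -x (n + 1)‖ = B (i + 2) n := by
        show _ = ‖x (n + (i + 2) + 1) + x (n + 1)‖
        rw [sub_neg_eq_add, show n + (i + 2) + 1 = n + i + 2 + 1 by omega]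
      have e4 : ‖-x (n + 1 + 1) - x (n + i + 2)‖ = B i (n + 1) := by
        show _ = ‖x (n + 1 + i + 1) + x (n + 1 + 1)‖
        rw [← norm_neg, show n + 1 + i + 1 = n + i + 2 by omega]
        congr 1
        abel
      rw [e1, e2, e3, e4] at h
      exact h
    have h1 : Filter.Tendsto (fun n => B (i + 1) (n + 1)) Filter.atTop (nhds (s (i + 1))) :=
      (hstend (i + 1)).comp (Filter.tendsto_add_atTop_nat 1)
    have h2 : Filter.Tendsto
        (fun n => a * B (i + 1) n + c * (B (i + 2) n + B i (n + 1))) Filter.atTop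
        (nhds (a * s (i + 1) + c * (s (i + 2) + s i))) := by
      refine (((hstend (i + 1)).const_mul a).add (((hstend (i + 2)).add ?_).const_mul c))
      exact (hstend i).comp (Filter.tendsto_add_atTop_nat 1)
    exact le_of_tendsto_of_tendsto' h1 h2 hpt
  -- all limits equal 2r
  have hs_eq : ∀ i, s i = 2 * r := by
    have hs1 : 2 * r ≤ s 1 := by
      have h : (2 * c) * s 0 ≤ (2 * c) * s 1 := by nlinarith [hrec0, hs0]
      have := le_of_mul_le_mul_left h (by linarith : (0 : ℝ) < 2 * c)
      linarith [hs0, this]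
    have key : ∀ i, s i = 2 * r ∧ 2 * r ≤ s (i + 1) := by
      intro i
      induction i with
      | zero => exact ⟨hs0, hs1⟩
      | succ i ih =>
        obtain ⟨hi, hi1⟩ := ih
        have hieq : s (i + 1) = 2 * r := le_antisymm (hs_le _) hi1
        refine ⟨hieq, ?_⟩
        have h := hrec i
        have h2 : 2 * s (i + 1) ≤ s (i + 2) + s i := by nlinarith [h]
        rw [hieq, hi] at h2
        linarith
    exact fun i => (key i).1
  -- the key lower bound on sums
  have hkey : ∀ m n, 2 * r ≤ ‖x (m + 1) + x (n + 1)‖ := by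
    have hbase : ∀ n i, 2 * r ≤ ‖x (n + i + 1) + x (n + 1)‖ := by
      intro n i
      have := hsle i n
      rw [hs_eq i] at this
      exact this
    intro m n
    rcases le_total n m with h | h
    · obtain ⟨i, rfl⟩ := Nat.exists_eq_add_of_le h
      exact hbase n i
    · obtain ⟨i, rfl⟩ := Nat.exists_eq_add_of_le h
      rw [add_comm (x (m + 1))]
      exact hbase m i
  -- the sequence is Cauchy
  have hcauchy : CauchySeq x := by
    rcases eq_or_lt_of_le hr0 with hr | hr
    · -- r = 0 : the sequence tends to 0
      have h0 : Filter.Tendsto x Filter.atTop (nhds 0) := by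
        rw [← Filter.tendsto_add_atTop_iff_nat 1]
        rw [tendsto_zero_iff_norm_tendsto_zero]
        rw [← hr] at htends
        exact htends
      exact h0.cauchySeq
    · rw [Metric.cauchySeq_iff]
      intro ε hε
      have hε' : 0 < ε / (2 * r) := by positivity
      obtain ⟨δ, hδ, H⟩ := exists_forall_closed_ball_dist_add_le_two_sub X hε'
      set δ' : ℝ := min δ 1 with hδ'def
      have hδ'pos : 0 < δ' := lt_min hδ zero_lt_one
      have hδ'1 : δ' ≤ 1 := min_le_right _ _
      have hbound : r < 2 * r / (2 - δ') := by
        rw [lt_div_iff₀ (by linarith)]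
        nlinarith
      obtain ⟨N, hN⟩ := (Filter.eventually_atTop).mp (htends.eventually_lt_const hbound)
      refine ⟨N + 1, ?_⟩
      set R : ℝ := ‖x (N + 1)‖ with hRdef
      have hrR : r ≤ R := hrle N
      have hRpos : 0 < R := lt_of_lt_of_le hr hrR
      have hRlt : R < 2 * r / (2 - δ') := hN N le_rfl
      have hR2r : R ≤ 2 * r := by
        have h1 : 2 * r / (2 - δ') ≤ 2 * r := by
          rw [div_le_iff₀ (by linarith)]
          nlinarith
        linarith
      intro m hm n hn
      obtain ⟨m', rfl⟩ : ∃ m', m = m' + 1 := ⟨m - 1, by omega⟩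
      obtain ⟨n', rfl⟩ : ∃ n', n = n' + 1 := ⟨n - 1, by omega⟩
      have hm' : N ≤ m' := by omega
      have hn' : N ≤ n' := by omega
      have hxm : ‖x (m' + 1)‖ ≤ R := hnorm_anti hm'
      have hxn : ‖x (n' + 1)‖ ≤ R := hnorm_anti hn'
      rw [dist_eq_norm]
      by_contra hcon
      push_neg at hcon
      set u : X := R⁻¹ • x (m' + 1) with hudef
      set v : X := R⁻¹ • x (n' + 1) with hvdef
      have hu : ‖u‖ ≤ 1 := by
        rw [hudef, norm_smul, norm_inv, Real.norm_eq_abs, abs_of_pos hRpos]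
        rw [inv_mul_le_iff₀ hRpos]
        simpa using hxm
      have hv : ‖v‖ ≤ 1 := by
        rw [hvdef, norm_smul, norm_inv, Real.norm_eq_abs, abs_of_pos hRpos]
        rw [inv_mul_le_iff₀ hRpos]
        simpa using hxn
      have huv : ε / (2 * r) ≤ ‖u - v‖ := by
        rw [hudef, hvdef, ← smul_sub, norm_smul, norm_inv, Real.norm_eq_abs,
          abs_of_pos hRpos]
        rw [div_le_iff₀ (by linarith : (0:ℝ) < 2 * r)]
        have : ε ≤ ‖x (m' + 1) - x (n' + 1)‖ := hcon
        calc ε ≤ ‖x (m' + 1) - x (n' + 1)‖ := hcon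
          _ = R⁻¹ * ‖x (m' + 1) - x (n' + 1)‖ * R := by
              field_simp
          _ ≤ R⁻¹ * ‖x (m' + 1) - x (n' + 1)‖ * (2 * r) := by
              have hnn : 0 ≤ R⁻¹ * ‖x (m' + 1) - x (n' + 1)‖ := by positivity
              exact mul_le_mul_of_nonneg_left hR2r hnn
      have hsumle : ‖u + v‖ ≤ 2 - δ := H hu hv huv
      have hsumge : 2 * r / R ≤ ‖u + v‖ := by
        rw [hudef, hvdef, ← smul_add, norm_smul, norm_inv, Real.norm_eq_abs,
          abs_of_pos hRpos]
        rw [div_le_iff₀ hRpos] at *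
        have := hkey m' n'
        calc 2 * r ≤ ‖x (m' + 1) + x (n' + 1)‖ := hkey m' n'
          _ = R⁻¹ * ‖x (m' + 1) + x (n' + 1)‖ * R := by field_simp
      have hfin : 2 - δ' < 2 * r / R := by
        rw [lt_div_iff₀ hRpos]
        have h2 : R * (2 - δ') < 2 * r := by
          rw [← lt_div_iff₀ (by linarith : (0:ℝ) < 2 - δ')] at *
          exact hRlt
        linarith
      have : δ' ≤ δ := min_le_left _ _
      linarith
  obtain ⟨z, hz⟩ := cauchySeq_tendsto_of_complete hcauchy
  have hzC : z ∈ C := hclosed.mem_of_tendsto hz (Filter.Eventually.of_forall hxC)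
  have hfix : T z = z := by
    have h1 : Filter.Tendsto (fun n => ‖x (n + 1) - T z‖) Filter.atTop (nhds ‖z - T z‖) :=
      ((hz.comp (Filter.tendsto_add_atTop_nat 1)).sub_const (T z)).norm
    have h2 : Filter.Tendsto
        (fun n => a * ‖x n - z‖ + c * (‖x (n + 1) - z‖ + ‖T z - x n‖)) Filter.atTop
        (nhds (a * ‖z - z‖ + c * (‖z - z‖ + ‖T z - z‖))) := by
      have ht1 : Filter.Tendsto (fun n => ‖x n - z‖) Filter.atTop (nhds ‖z - z‖) :=
        (hz.sub_const z).norm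
      have ht2 : Filter.Tendsto (fun n => ‖x (n + 1) - z‖) Filter.atTop (nhds ‖z - z‖) :=
        ((hz.comp (Filter.tendsto_add_atTop_nat 1)).sub_const z).norm
      have ht3 : Filter.Tendsto (fun n => ‖T z - x n‖) Filter.atTop (nhds ‖T z - z‖) :=
        ((tendsto_const_nhds.sub hz).norm)
      exact (ht1.const_mul a).add ((ht2.add ht3).const_mul c)
    have hpt : ∀ n, ‖x (n + 1) - T z‖ ≤
        a * ‖x n - z‖ + c * (‖x (n + 1) - z‖ + ‖T z - x n‖) := by
      intro n
      have h := hineq (x n) (hxC n) z hzC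
      rw [← hstep] at h
      exact h
    have hle := le_of_tendsto_of_tendsto' h1 h2 hpt
    simp only [sub_self, norm_zero, mul_zero, zero_add] at hle
    have hrev : ‖T z - z‖ = ‖z - T z‖ := norm_sub_rev _ _
    rw [hrev] at hle
    have hc1 : c < 1 := by linarith [ha.1]
    have hz0 : ‖z - T z‖ = 0 :=
      le_antisymm (by nlinarith [norm_nonneg (z - T z)]) (norm_nonneg _)
    have := norm_eq_zero.mp hz0
    have := sub_eq_zero.mp this
    exact this.symm
  exact ⟨z, hzC, hfix, hz⟩
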